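/- Let t ∈ ℕ₊, r ∈ ℕ₊, 0 ≤ j < r, and let (x, x+P₁(y), …, x+P_t(y)) be an integral polynomial progression whose every algebraic relation (Q₀,…,Q_t) has max deg Qᵢ ≤ 1 (algebraic complexity at most 1). Define P̃ᵢ(y) = (Pᵢ(r(y−1)+j) − Pᵢ(j))/r. Then the progression (x, x+P̃₁(y), …, x+P̃_t(y)) also has algebraic complexity at most 1, and moreover a tuple (a₀,…,a_t) ∈ ℝ^{t+1} gives a degree-1 relation a₀x + Σᵢ aᵢ(x+P̃ᵢ(y)) = 0 for the new progression if and only if it gives one for the original progression. -/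
import Mathlib


open Polynomial

/-- `(Q₀, …, Q_t)` is an algebraic relation satisfied by `(x, x+R₁(y), …, x+R_t(y))`. -/
def IsRelation (t : ℕ) (R : Fin t → Polynomial ℝ) (Q : Fin (t + 1) → Polynomial ℝ) : Prop :=
  aeval (X : Polynomial (Polynomial ℝ)) (Q 0) +
    ∑ i : Fin t, aeval ((X : Polynomial (Polynomial ℝ)) + C (R i)) (Q i.succ) = 0

/-- The dilated polynomial `P̃(y) = (P(r(y−1)+j) − P(j))/r`. -/
noncomputable def dilate (r j : ℕ) (P : Polynomial ℝ) : Polynomial ℝ :=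
  ((r : ℝ)⁻¹) • (P.comp (C (r : ℝ) * (X - 1) + C (j : ℝ)) - C (P.eval (j : ℝ)))

noncomputable def Adil (r j : ℕ) : Polynomial ℝ := C (r : ℝ) * (X - 1) + C (j : ℝ)
noncomputable def Bdil (r j : ℕ) : Polynomial ℝ := C (r : ℝ)⁻¹ * (X - C (j : ℝ)) + 1

lemma Adil_comp_Bdil (r j : ℕ) (hr : (r:ℝ) ≠ 0) : (Adil r j).comp (Bdil r j) = X := by
  have h : (C (r:ℝ)) * C (r:ℝ)⁻¹ = 1 := by
    rw [← C_mul, mul_inv_cancel₀ hr, C_1]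
  simp only [Adil, Bdil, add_comp, mul_comp, sub_comp, C_comp, X_comp, one_comp]
  ring_nf
  rw [h]
  ring

lemma dilate_comp_Bdil (r j : ℕ) (hr : (r:ℝ) ≠ 0) (P : Polynomial ℝ) :
    (dilate r j P).comp (Bdil r j) = (r:ℝ)⁻¹ • (P - C (P.eval (j:ℝ))) := by
  have : P.comp (C (r : ℝ) * (X - 1) + C (j : ℝ)) = P.comp (Adil r j) := rfl
  rw [dilate, this, smul_comp, sub_comp, C_comp, comp_assoc, Adil_comp_Bdil r j hr, comp_X]

/-- `dilate` kills exactly the polynomials that are constant; for `S` with `S(0)=0`,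
`dilate S = 0 ↔ S = 0`. -/
lemma dilate_eq_zero_iff (r j : ℕ) (hr : (r:ℝ) ≠ 0) (S : Polynomial ℝ) (h0 : S.eval 0 = 0) :
    dilate r j S = 0 ↔ S = 0 := by
  constructor
  · intro h
    have h2 : (dilate r j S).comp (Bdil r j) = 0 := by rw [h, zero_comp]
    rw [dilate_comp_Bdil r j hr, smul_eq_zero] at h2
    rcases h2 with h2 | h2
    · exact absurd h2 (inv_ne_zero hr)
    · have h3 : S = C (S.eval (j:ℝ)) := sub_eq_zero.mp h2
      have h4 : S.eval (j:ℝ) = 0 := by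
        have := congrArg (eval (0:ℝ)) h3
        simpa [h0] using this.symm
      rw [h3, h4, C_0]
  · intro h
    simp [h, dilate]

noncomputable def dilateLM (r j : ℕ) : Polynomial ℝ →ₗ[ℝ] Polynomial ℝ where
  toFun := dilate r j
  map_add' p q := by
    simp only [dilate, add_comp, eval_add, C_add, smul_eq_C_mul]
    ring
  map_smul' a p := by
    simp only [dilate, RingHom.id_apply, smul_eq_C_mul, mul_comp, C_comp, eval_mul, eval_C,
      C_mul]
    ring

lemma dilate_sum {t : ℕ} (r j : ℕ) (a : Fin t → ℝ) (P : Fin t → Polynomial ℝ) :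
    (∑ i : Fin t, a i • dilate r j (P i)) = dilate r j (∑ i : Fin t, a i • P i) := by
  have := map_sum (dilateLM r j) (fun i => a i • P i) Finset.univ
  simp only [map_smul] at this
  exact this.symm

lemma linrel_iff (t : ℕ) (R : Fin t → Polynomial ℝ) (a : Fin (t + 1) → ℝ) :
    ((C (C (a 0)) * X : Polynomial (Polynomial ℝ)) +
        ∑ i : Fin t, C (C (a i.succ)) * (X + C (R i)) = 0) ↔
      ((a 0 + ∑ i : Fin t, a i.succ) = 0 ∧ (∑ i : Fin t, a i.succ • R i) = 0) := by
  have expand : (C (C (a 0)) * X : Polynomial (Polynomial ℝ)) +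
      ∑ i : Fin t, C (C (a i.succ)) * (X + C (R i)) =
      C (C (a 0 + ∑ i : Fin t, a i.succ)) * X + C (∑ i : Fin t, a i.succ • R i) := by
    have term : ∀ i : Fin t, (C (C (a i.succ)) * (X + C (R i)) : Polynomial (Polynomial ℝ)) =
        C (C (a i.succ)) * X + C (a i.succ • R i) := by
      intro i; rw [mul_add, ← C_mul, smul_eq_C_mul]
    rw [Finset.sum_congr rfl (fun i _ => term i), Finset.sum_add_distrib, ← Finset.sum_mul,
      ← map_sum, ← map_sum, ← add_assoc, ← add_mul, ← C_add, ← C_add, ← map_sum]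
  rw [expand]
  constructor
  · intro h
    have h1 := congrArg (fun p => Polynomial.coeff p 1) h
    have h0 := congrArg (fun p => Polynomial.coeff p 0) h
    simp only [coeff_add, coeff_C_mul, coeff_X_one, mul_one, coeff_C, one_ne_zero, if_false,
      add_zero, coeff_zero, C_eq_zero, coeff_X_zero, mul_zero, zero_add, if_true] at h1 h0
    exact ⟨h1, h0⟩
  · rintro ⟨h1, h2⟩
    simp [h1, h2]

noncomputable def psiDil (r j : ℕ) : Polynomial (Polynomial ℝ) →ₐ[ℝ] Polynomial (Polynomial ℝ) :=
  (mapAlgHom (aeval (Bdil r j) : Polynomial ℝ →ₐ[ℝ] Polynomial ℝ)).comp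
    ((Polynomial.aeval (C (C ((r : ℝ)⁻¹)) * X : Polynomial (Polynomial ℝ))).restrictScalars ℝ)

lemma psiDil_X (r j : ℕ) : psiDil r j (X : Polynomial (Polynomial ℝ)) = C (C ((r : ℝ)⁻¹)) * X := by
  simp [psiDil, coe_mapAlgHom, Polynomial.map_mul, map_C, algebraMap_eq]

lemma psiDil_C (r j : ℕ) (p : Polynomial ℝ) :
    psiDil r j (C p : Polynomial (Polynomial ℝ)) = C (p.comp (Bdil r j)) := by
  simp [psiDil, coe_mapAlgHom, comp_eq_aeval]

lemma relation_transfer (t r j : ℕ) (hr : (r : ℝ) ≠ 0) (P : Fin t → Polynomial ℝ)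
    (Q : Fin (t + 1) → Polynomial ℝ) (hQ : IsRelation t (fun i => dilate r j (P i)) Q) :
    IsRelation t P (fun i => (Q i).comp
      (C ((r : ℝ)⁻¹) * X - C ((r : ℝ)⁻¹ *
        (Fin.cases 0 (fun k => (P k).eval (j : ℝ)) i : ℝ)))) := by
  unfold IsRelation at hQ ⊢
  have h2 := congrArg (psiDil r j) hQ
  rw [map_add, map_sum, map_zero] at h2
  have key0 : aeval (X : Polynomial (Polynomial ℝ))
      ((Q 0).comp (C ((r : ℝ)⁻¹) * X - C ((r : ℝ)⁻¹ *
        (Fin.cases 0 (fun k => (P k).eval (j : ℝ)) (0 : Fin (t+1)) : ℝ)))) =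
      psiDil r j (aeval (X : Polynomial (Polynomial ℝ)) (Q 0)) := by
    rw [← aeval_algHom_apply, aeval_comp, psiDil_X]
    congr 1
    simp [algebraMap_eq]
  have key : ∀ k : Fin t, aeval ((X : Polynomial (Polynomial ℝ)) + C (P k))
      ((Q k.succ).comp (C ((r : ℝ)⁻¹) * X - C ((r : ℝ)⁻¹ *
        (Fin.cases 0 (fun m => (P m).eval (j : ℝ)) k.succ : ℝ)))) =
      psiDil r j (aeval ((X : Polynomial (Polynomial ℝ)) + C (dilate r j (P k))) (Q k.succ)) := by
    intro k
    rw [← aeval_algHom_apply, aeval_comp, map_add, psiDil_X, psiDil_C,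
      dilate_comp_Bdil r j hr]
    have halg : ∀ a : ℝ, algebraMap ℝ (Polynomial (Polynomial ℝ)) a = C (C a) := fun a => rfl
    have hAB : (aeval ((X : Polynomial (Polynomial ℝ)) + C (P k))
        (C ((r : ℝ)⁻¹) * X - C ((r : ℝ)⁻¹ *
          (Fin.cases 0 (fun m => (P m).eval (j : ℝ)) k.succ : ℝ))) : Polynomial (Polynomial ℝ)) =
        C (C ((r : ℝ)⁻¹)) * X + C ((r : ℝ)⁻¹ • (P k - C ((P k).eval (j : ℝ)))) := by
      simp only [Fin.cases_succ, map_sub, map_mul, aeval_X, aeval_C, halg, smul_sub,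
        smul_eq_C_mul, smul_C, smul_eq_mul, C_sub, C_mul]
      ring
    rw [hAB]
  rw [key0, Finset.sum_congr rfl (fun k _ => key k), ← map_sum, ← map_add]
  rw [hQ, map_zero]

/-- If `(x, x+P₁(y), …, x+P_t(y))` has algebraic complexity at most 1, so does
the dilated progression, and the degree-1 relations of the two progressions coincide. -/
theorem stmt14 (t : ℕ) (ht : 0 < t) (r : ℕ) (hr : 0 < r) (j : ℕ) (hj : j < r)
    (P : Fin t → Polynomial ℝ)
    (hint : ∀ i, (∀ n : ℤ, ∃ m : ℤ, (P i).eval (n : ℝ) = m) ∧ (P i).eval 0 = 0)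
    (hinj : Function.Injective P)
    (hcx : ∀ Q : Fin (t + 1) → Polynomial ℝ, IsRelation t P Q → ∀ i, (Q i).natDegree ≤ 1) :
    (∀ Q : Fin (t + 1) → Polynomial ℝ, IsRelation t (fun i => dilate r j (P i)) Q →
      ∀ i, (Q i).natDegree ≤ 1) ∧
    (∀ a : Fin (t + 1) → ℝ,
      ((C (C (a 0)) * X : Polynomial (Polynomial ℝ)) +
          ∑ i : Fin t, C (C (a i.succ)) * (X + C (dilate r j (P i))) = 0) ↔
        ((C (C (a 0)) * X : Polynomial (Polynomial ℝ)) +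
          ∑ i : Fin t, C (C (a i.succ)) * (X + C (P i)) = 0)) := by

  have hr' : (r : ℝ) ≠ 0 := Nat.cast_ne_zero.mpr hr.ne'
  constructor
  · intro Q hQ i
    have hdeg := hcx _ (relation_transfer t r j hr' P Q hQ) i
    have hg : (C ((r : ℝ)⁻¹) * X - C ((r : ℝ)⁻¹ *
        (Fin.cases 0 (fun k => (P k).eval (j : ℝ)) i : ℝ))).natDegree = 1 := by
      rw [sub_eq_add_neg, ← C_neg]
      exact natDegree_linear (inv_ne_zero hr')
    rwa [natDegree_comp, hg, mul_one] at hdeg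
  · intro a
    rw [linrel_iff, linrel_iff]
    apply and_congr_right
    intro _
    rw [dilate_sum, dilate_eq_zero_iff r j hr']
    simp [eval_finset_sum, fun i => (hint i).2]
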